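/- If B is 1-generic over A and A is 1-generic, then A ⊕ B is 1-generic. -/

import Mathlib

/-- `RecursiveInO O f` means the partial function `f : ℕ →. ℕ` is partial recursive
relative to the oracle `O : ℕ →. ℕ`. -/
inductive RecursiveInO (O : ℕ →. ℕ) : (ℕ →. ℕ) → Prop
  | oracle : RecursiveInO O O
  | zero : RecursiveInO O (pure 0)
  | succ : RecursiveInO O Nat.succ
  | left : RecursiveInO O fun n => (Nat.unpair n).1
  | right : RecursiveInO O fun n => (Nat.unpair n).2
  | pair {f g : ℕ →. ℕ} : RecursiveInO O f → RecursiveInO O g →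
      RecursiveInO O fun n => Nat.pair <$> f n <*> g n
  | comp {f g : ℕ →. ℕ} : RecursiveInO O f → RecursiveInO O g →
      RecursiveInO O fun n => g n >>= f
  | prec {f g : ℕ →. ℕ} : RecursiveInO O f → RecursiveInO O g →
      RecursiveInO O (Nat.unpaired fun a n =>
        n.rec (f a) fun y IH => do let i ← IH; g (Nat.pair a (Nat.pair y i)))
  | rfind {f : ℕ →. ℕ} : RecursiveInO O f →
      RecursiveInO O fun a => Nat.rfind fun n => (fun m => m = 0) <$> f (Nat.pair a n)

/-- Turing reducibility on total functions in Baire space. -/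
def TuringLE (f g : ℕ → ℕ) : Prop := RecursiveInO (↑g) (↑f)

/-- Turing equivalence. -/
def TuringEquiv (f g : ℕ → ℕ) : Prop := TuringLE f g ∧ TuringLE g f

/-- The join `f ⊕ g` of two elements of Baire space. -/
def fjoin (f g : ℕ → ℕ) : ℕ → ℕ := fun n => if n % 2 = 0 then f (n / 2) else g (n / 2)

/-- Codes for oracle Turing machines (partial recursive functionals with one oracle). -/
inductive Codeo : Type
  | oracle : Codeo
  | zero : Codeo
  | succ : Codeo
  | left : Codeo
  | right : Codeo
  | pair : Codeo → Codeo → Codeo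
  | comp : Codeo → Codeo → Codeo
  | prec : Codeo → Codeo → Codeo
  | rfind : Codeo → Codeo

/-- Evaluation of a code relative to a (possibly partial) oracle. -/
def evalo (O : ℕ →. ℕ) : Codeo → ℕ →. ℕ
  | Codeo.oracle => O
  | Codeo.zero => pure 0
  | Codeo.succ => Nat.succ
  | Codeo.left => fun n => (Nat.unpair n).1
  | Codeo.right => fun n => (Nat.unpair n).2
  | Codeo.pair a b => fun n => Nat.pair <$> evalo O a n <*> evalo O b n
  | Codeo.comp a b => fun n => evalo O b n >>= evalo O a
  | Codeo.prec a b => Nat.unpaired fun x y =>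
      y.rec (evalo O a x) fun y IH => do let i ← IH; evalo O b (Nat.pair x (Nat.pair y i))
  | Codeo.rfind a => fun n =>
      Nat.rfind fun m => (fun k => k = 0) <$> evalo O a (Nat.pair n m)

/-- A Gödel numbering of the oracle codes. -/
def encodeCodeo : Codeo → ℕ
  | Codeo.oracle => 0
  | Codeo.zero => 1
  | Codeo.succ => 2
  | Codeo.left => 3
  | Codeo.right => 4
  | Codeo.pair a b => 4 * Nat.pair (encodeCodeo a) (encodeCodeo b) + 5
  | Codeo.comp a b => 4 * Nat.pair (encodeCodeo a) (encodeCodeo b) + 6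
  | Codeo.prec a b => 4 * Nat.pair (encodeCodeo a) (encodeCodeo b) + 7
  | Codeo.rfind a => 4 * encodeCodeo a + 8

/-- The Turing jump of an oracle: the diagonal halting set `{e : {e}^O(e)↓}`. -/
def jump (O : ℕ →. ℕ) : Set ℕ :=
  {n | ∃ c : Codeo, encodeCodeo c = n ∧ (evalo O c n).Dom}

open Classical in
/-- The characteristic function of a set of naturals. -/
noncomputable def chi (A : Set ℕ) : ℕ → ℕ := fun n => if n ∈ A then 1 else 0

/-- The halting problem `∅′`. -/
noncomputable def K : Set ℕ := jump ↑(chi (∅ : Set ℕ))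

/-- A set `A` (or a function) is low if its jump is Turing reducible to `∅′`. -/
noncomputable def LowSet (A : Set ℕ) : Prop := TuringLE (chi (jump ↑(chi A))) (chi K)

/-- A function `f` is low if its jump is Turing reducible to `∅′`. -/
noncomputable def LowFun (f : ℕ → ℕ) : Prop := TuringLE (chi (jump ↑f)) (chi K)

/-- The join `A ⊕ B` of two sets of naturals. -/
def sjoin (A B : Set ℕ) : Set ℕ :=
  {n | (n % 2 = 0 ∧ n / 2 ∈ A) ∨ (n % 2 = 1 ∧ n / 2 ∈ B)}

/-- A finite binary string viewed as a partial oracle, undefined beyond its length. -/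
def listOracle (σ : List Bool) : ℕ →. ℕ :=
  fun n => if h : n < σ.length then Part.some (if σ.get ⟨n, h⟩ then 1 else 0) else Part.none

/-- The join of a total oracle (on even positions) with a partial oracle (odd positions). -/
def join2P (f : ℕ → ℕ) (g : ℕ →. ℕ) : ℕ →. ℕ :=
  fun n => if n % 2 = 0 then Part.some (f (n / 2)) else g (n / 2)

/-- `σ` is a finite initial segment of (the characteristic function of) `C`. -/
def IsInitSeg (σ : List Bool) (C : Set ℕ) : Prop :=
  ∀ i : ℕ, ∀ h : i < σ.length, (σ.get ⟨i, h⟩ = true ↔ i ∈ C)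

/-- `C` is 1-generic over `A`: for every (code of an) oracle machine `e` there is a finite
initial segment `σ` of `C` such that either `{e}^{A ⊕ σ}(e)↓`, or `{e}^{A ⊕ τ}(e)↑` for
every finite binary string `τ ⊇ σ`. -/
noncomputable def OneGenericOver (A C : Set ℕ) : Prop :=
  ∀ c : Codeo, ∃ σ : List Bool, IsInitSeg σ C ∧
    ((evalo (join2P (chi A) (listOracle σ)) c (encodeCodeo c)).Dom ∨
      ∀ τ : List Bool, σ <+: τ →
        ¬ (evalo (join2P (chi A) (listOracle τ)) c (encodeCodeo c)).Dom)

/-- `C` is 1-generic (over the empty, i.e. a computable, oracle). -/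
noncomputable def OneGeneric (C : Set ℕ) : Prop := OneGenericOver ∅ C
namespace OGJ

open Part

/-- A functional has a uniform oracle code. -/
def UCode (F : (ℕ →. ℕ) → ℕ →. ℕ) : Prop := ∃ c : Codeo, ∀ O, evalo O c = F O

theorem ucode_oracle : UCode fun O => O := ⟨Codeo.oracle, fun _ => rfl⟩

theorem ucode_pair {F G : (ℕ →. ℕ) → ℕ →. ℕ} (hF : UCode F) (hG : UCode G) :
    UCode fun O n => Nat.pair <$> F O n <*> G O n := by
  obtain ⟨cf, hcf⟩ := hF; obtain ⟨cg, hcg⟩ := hG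
  exact ⟨Codeo.pair cf cg, fun O => by funext n; simp [evalo, hcf O, hcg O]⟩

theorem ucode_comp {F G : (ℕ →. ℕ) → ℕ →. ℕ} (hF : UCode F) (hG : UCode G) :
    UCode fun O n => G O n >>= F O := by
  obtain ⟨cf, hcf⟩ := hF; obtain ⟨cg, hcg⟩ := hG
  exact ⟨Codeo.comp cf cg, fun O => by funext n; simp [evalo, hcf O, hcg O]⟩

theorem ucode_prec {F G : (ℕ →. ℕ) → ℕ →. ℕ} (hF : UCode F) (hG : UCode G) :
    UCode fun O => Nat.unpaired fun a m =>
      m.rec (F O a) fun y IH => IH >>= fun i => G O (Nat.pair a (Nat.pair y i)) := by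
  obtain ⟨cf, hcf⟩ := hF; obtain ⟨cg, hcg⟩ := hG
  refine ⟨Codeo.prec cf cg, fun O => ?_⟩
  funext n
  simp only [evalo, hcf O, hcg O]

theorem ucode_rfind {F : (ℕ →. ℕ) → ℕ →. ℕ} (hF : UCode F) :
    UCode fun O a => Nat.rfind fun n => (fun m => m = 0) <$> F O (Nat.pair a n) := by
  obtain ⟨cf, hcf⟩ := hF
  exact ⟨Codeo.rfind cf, fun O => by funext n; simp [evalo, hcf O]⟩

theorem ucode_partrec {f : ℕ →. ℕ} (hf : Nat.Partrec f) : UCode fun _ => f := by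
  induction hf with
  | zero => exact ⟨Codeo.zero, fun _ => rfl⟩
  | succ => exact ⟨Codeo.succ, fun _ => rfl⟩
  | left => exact ⟨Codeo.left, fun _ => rfl⟩
  | right => exact ⟨Codeo.right, fun _ => rfl⟩
  | pair _ _ ihf ihg => exact ucode_pair ihf ihg
  | comp _ _ ihf ihg => exact ucode_comp ihf ihg
  | prec _ _ ihf ihg => exact ucode_prec ihf ihg
  | rfind _ ihf => exact ucode_rfind ihf

theorem ucode_partrec' {f : ℕ → ℕ} (hf : Primrec f) : UCode fun _ n => Part.some (f n) :=
  ucode_partrec (Nat.Partrec.of_primrec (Primrec.nat_iff.1 hf))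

/-- Postcompose with a total computable function. -/
theorem ucode_map {F : (ℕ →. ℕ) → ℕ →. ℕ} (hF : UCode F) {g : ℕ → ℕ} (hg : Primrec g) :
    UCode fun O n => (F O n).map g := by
  have := ucode_comp (ucode_partrec' hg) hF
  refine this.imp fun c hc => ?_
  intro O; rw [hc O]; funext n
  exact Part.ext fun x => by simp [Part.mem_map_iff, Part.mem_bind_iff, eq_comm]

/-- Precompose with a total computable function. -/
theorem ucode_precomp {F : (ℕ →. ℕ) → ℕ →. ℕ} (hF : UCode F) {g : ℕ → ℕ} (hg : Primrec g) :
    UCode fun O n => F O (g n) := by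
  have := ucode_comp hF (ucode_partrec' hg)
  refine this.imp fun c hc => ?_
  intro O; rw [hc O]; funext n
  exact Part.ext fun x => by
    exact iff_of_eq (congrArg (x ∈ ·) (Part.bind_some (g n) (F O)))

end OGJ
namespace OGJ

open Encodable Denumerable

theorem UCode.of_eq {F G : (ℕ →. ℕ) → ℕ →. ℕ} (hF : UCode F) (h : ∀ O n, F O n = G O n) :
    UCode G := hF.imp fun c hc O => by rw [hc O]; funext n; exact h O n

theorem pair_some_seq {x : ℕ} {y : Part ℕ} :
    (Nat.pair <$> Part.some x <*> y) = y.map (Nat.pair x) := by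
  apply Part.ext
  intro z
  simp [Seq.seq]

/-- Sequentially read the first `n` oracle values (most recent first). -/
def seqList (O : ℕ →. ℕ) : ℕ → Part (List ℕ)
  | 0 => Part.some []
  | n + 1 => (seqList O n).bind fun l => (O n).map (· :: l)

theorem seqList_dom {O : ℕ →. ℕ} : ∀ {n : ℕ}, (seqList O n).Dom → ∀ j < n, (O j).Dom := by
  intro n
  induction n with
  | zero => intro _ j hj; omega
  | succ n ih =>
    intro h j hj
    obtain ⟨l, hl⟩ := Part.dom_iff_mem.1 h
    rw [seqList, Part.mem_bind_iff] at hl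
    obtain ⟨l', hl', hmem⟩ := hl
    rcases Nat.lt_succ_iff_lt_or_eq.1 hj with hj | rfl
    · exact ih (Part.dom_iff_mem.2 ⟨l', hl'⟩) j hj
    · rw [Part.mem_map_iff _] at hmem
      obtain ⟨v, hv, _⟩ := hmem
      exact Part.dom_iff_mem.2 ⟨v, hv⟩

theorem seqList_eq {O : ℕ →. ℕ} {v : ℕ → ℕ} :
    ∀ {n : ℕ}, (∀ j < n, v j ∈ O j) →
      seqList O n = Part.some (((List.range n).map v).reverse) := by
  intro n
  induction n with
  | zero => intro _; rfl
  | succ n ih =>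
    intro h
    rw [seqList, ih (fun j hj => h j (Nat.lt_succ_of_lt hj)),
      Part.eq_some_iff.2 (h n (Nat.lt_succ_self n))]
    simp [List.range_succ]

/-- The reading functional: on input `(a, n)` it returns the code of the list of the
first `n` oracle values (most recent first). -/
theorem ucode_read : UCode fun O => Nat.unpaired fun _ n => (seqList O n).map encode := by
  have hq : Primrec fun m : ℕ => m.unpair.2.unpair.1 :=
    (Primrec.fst.comp Primrec.unpair).comp (Primrec.snd.comp Primrec.unpair)
  have hfin : Primrec fun p : ℕ =>
      encode (p.unpair.2 :: ofNat (List ℕ) p.unpair.1.unpair.2.unpair.2) := by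
    have h1 : Primrec fun p : ℕ => p.unpair.2 := Primrec.snd.comp Primrec.unpair
    have h2 : Primrec fun p : ℕ => ofNat (List ℕ) p.unpair.1.unpair.2.unpair.2 :=
      (Primrec.ofNat (List ℕ)).comp <| (Primrec.snd.comp Primrec.unpair).comp <|
        (Primrec.snd.comp Primrec.unpair).comp (Primrec.fst.comp Primrec.unpair)
    exact Primrec.encode.comp (Primrec.list_cons.comp h1 h2)
  have h1 : UCode fun O m => Nat.pair <$> Part.some m <*> O m.unpair.2.unpair.1 :=
    ucode_pair (ucode_partrec' Primrec.id) (ucode_precomp ucode_oracle hq)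
  have hG : UCode fun O m => (O m.unpair.2.unpair.1).map
      (fun v => encode (v :: ofNat (List ℕ) m.unpair.2.unpair.2)) := by
    refine (ucode_map h1 hfin).of_eq fun O m => ?_
    rw [pair_some_seq, Part.map_map]
    congr 1
    funext v
    simp
  have hbase : UCode fun _ (_ : ℕ) => Part.some (encode ([] : List ℕ)) :=
    ucode_partrec' (Primrec.const _)
  have hP := ucode_prec hbase hG
  refine hP.of_eq fun O n => ?_
  simp only [Nat.unpaired]
  generalize n.unpair.1 = a
  generalize n.unpair.2 = m
  induction m with
  | zero => simp [seqList]
  | succ m ih =>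
    rw [seqList]
    simp only [Nat.unpair_pair, Part.bind_eq_bind] at ih
    simp only [Nat.rec_add_one, Nat.unpair_pair, ih, Part.bind_eq_bind]
    apply Part.ext
    intro x
    constructor
    · intro hx
      rw [Part.mem_bind_iff] at hx
      obtain ⟨i, hi, hx⟩ := hx
      rw [Part.mem_map_iff _] at hi
      obtain ⟨l, hl, rfl⟩ := hi
      rw [Part.mem_map_iff _] at hx
      obtain ⟨v, hv, rfl⟩ := hx
      rw [Part.mem_map_iff _]
      refine ⟨v :: l, ?_, by simp⟩
      rw [Part.mem_bind_iff]
      exact ⟨l, hl, (Part.mem_map_iff _).2 ⟨v, hv, rfl⟩⟩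
    · intro hx
      rw [Part.mem_map_iff _] at hx
      obtain ⟨l', hl', rfl⟩ := hx
      rw [Part.mem_bind_iff] at hl'
      obtain ⟨l, hl, hmem⟩ := hl'
      rw [Part.mem_map_iff _] at hmem
      obtain ⟨v, hv, rfl⟩ := hmem
      rw [Part.mem_bind_iff]
      refine ⟨encode l, (Part.mem_map_iff _).2 ⟨l, hl, rfl⟩, ?_⟩
      rw [Part.mem_map_iff _]
      exact ⟨v, hv, by simp⟩

end OGJ
namespace OGJ

open Encodable Denumerable

/-- Decode a natural number to a list of booleans. -/
def dList (n : ℕ) : List Bool := (Encodable.decode (α := List Bool) n).getD []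

theorem dList_encode (σ : List Bool) : dList (encode σ) = σ := by
  simp [dList]

theorem primrec_dList : Primrec dList :=
  Primrec.option_getD.comp Primrec.decode (Primrec.const [])

/-- The oracle coding a finite guess at `A ⊕ B` over the trivial oracle. -/
noncomputable def Oσ (σ : List Bool) : ℕ →. ℕ := join2P (chi ∅) (listOracle σ)

theorem chi_empty (n : ℕ) : chi (∅ : Set ℕ) n = 0 := by simp [chi]

theorem listOracle_eq (σ : List Bool) (n : ℕ) :
    listOracle σ n = Part.ofOption (σ[n]?.map fun b => if b then 1 else 0) := by
  unfold listOracle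
  split
  · next h => rw [List.getElem?_eq_getElem h]; rfl
  · next h =>
    rw [List.getElem?_eq_none (by omega)]
    rfl

theorem Oσ_eq (σ : List Bool) (n : ℕ) :
    Oσ σ n = Part.ofOption (if n % 2 = 0 then some 0
      else σ[n / 2]?.map fun b => if b then 1 else 0) := by
  unfold Oσ join2P
  split
  · next h => simp [h, chi_empty]
  · next h => simp [h, listOracle_eq]

private theorem natrec_bind_congr {b1 b2 : Part ℕ} (hb : b1 = b2) {h1 h2 : ℕ → ℕ → Part ℕ}
    (hh : ∀ y i, h1 y i = h2 y i) :
    ∀ n : ℕ, (n.rec b1 (fun y IH => IH >>= h1 y) : Part ℕ) =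
      (n.rec b2 (fun y IH => IH >>= h2 y) : Part ℕ) := by
  intro n
  induction n with
  | zero => exact hb
  | succ n ih => simp only [Nat.rec_add_one, ih]; exact congrArg _ (funext (hh n))

/-- Relative to the finite oracle coded in the first component, `evalo` is partial
recursive with no oracle. -/
theorem trans_partrec (c : Codeo) :
    Partrec fun m : ℕ => evalo (Oσ (dList m.unpair.1)) c m.unpair.2 := by
  induction c with
  | oracle =>
    have hg : Computable fun m : ℕ => if m.unpair.2 % 2 = 0 then some 0
        else (dList m.unpair.1)[m.unpair.2 / 2]?.map
          fun b => if b then 1 else 0 := by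
      have hm2 : Primrec fun m : ℕ => m.unpair.2 := Primrec.snd.comp Primrec.unpair
      have hm1 : Primrec fun m : ℕ => m.unpair.1 := Primrec.fst.comp Primrec.unpair
      refine Primrec.to_comp ?_
      refine Primrec.ite ?_ (Primrec.const _) ?_
      · exact PrimrecRel.comp Primrec.eq ((Primrec.nat_mod).comp hm2 (Primrec.const 2))
          (Primrec.const 0)
      · refine Primrec.option_map ?_ ?_
        · exact Primrec.list_getElem?.comp (primrec_dList.comp hm1)
            ((Primrec.nat_div).comp hm2 (Primrec.const 2))
        · exact (Primrec.dom_bool fun b => if b then (1 : ℕ) else 0).comp Primrec.snd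
    refine (Computable.ofOption hg).of_eq fun m => ?_
    simp only [evalo]
    rw [Oσ_eq]
  | zero => exact Partrec.nat_iff.2 Nat.Partrec.zero
  | succ =>
    refine ((Primrec.succ.comp (Primrec.snd.comp Primrec.unpair)).to_comp).partrec.of_eq
      fun m => ?_
    rfl
  | left =>
    refine (((Primrec.fst.comp Primrec.unpair).comp
      (Primrec.snd.comp Primrec.unpair)).to_comp).partrec.of_eq fun m => ?_
    rfl
  | right =>
    refine (((Primrec.snd.comp Primrec.unpair).comp
      (Primrec.snd.comp Primrec.unpair)).to_comp).partrec.of_eq fun m => ?_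
    rfl
  | pair cf cg ihf ihg =>
    exact Partrec.nat_iff.2 ((Partrec.nat_iff.1 ihf).pair (Partrec.nat_iff.1 ihg))
  | comp cf cg ihf ihg =>
    have h2 : Partrec₂ fun m v : ℕ =>
        evalo (Oσ (dList m.unpair.1)) cf v := by
      have hc : Computable fun p : ℕ × ℕ => Nat.pair p.1.unpair.1 p.2 :=
        (Primrec₂.natPair.comp ((Primrec.fst.comp Primrec.unpair).comp Primrec.fst)
          Primrec.snd).to_comp
      exact (ihf.comp hc).of_eq fun p => by simp
    exact (ihg.bind h2).of_eq fun m => by rfl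
  | prec cf cg ihf ihg =>
    have hr : Primrec fun q : ℕ =>
        Nat.pair q.unpair.1.unpair.1 (Nat.pair q.unpair.1.unpair.2 q.unpair.2) := by
      have u1 : Primrec fun q : ℕ => q.unpair.1 := Primrec.fst.comp Primrec.unpair
      have u2 : Primrec fun q : ℕ => q.unpair.2 := Primrec.snd.comp Primrec.unpair
      exact Primrec₂.natPair.comp (u1.comp u1) (Primrec₂.natPair.comp (u2.comp u1) u2)
    have hg0 : Partrec fun q : ℕ =>
        evalo (Oσ (dList q.unpair.1.unpair.1)) cg
          (Nat.pair q.unpair.1.unpair.2 q.unpair.2) :=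
      (ihg.comp hr.to_comp).of_eq fun q => by simp
    have hP := Nat.Partrec.prec (Partrec.nat_iff.1 ihf) (Partrec.nat_iff.1 hg0)
    have hrr : Primrec fun m : ℕ =>
        Nat.pair (Nat.pair m.unpair.1 m.unpair.2.unpair.1) m.unpair.2.unpair.2 := by
      have u1 : Primrec fun q : ℕ => q.unpair.1 := Primrec.fst.comp Primrec.unpair
      have u2 : Primrec fun q : ℕ => q.unpair.2 := Primrec.snd.comp Primrec.unpair
      exact Primrec₂.natPair.comp (Primrec₂.natPair.comp u1 (u1.comp u2)) (u2.comp u2)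
    refine ((Partrec.nat_iff.2 hP).comp hrr.to_comp).of_eq fun m => ?_
    simp only [Nat.unpaired, Nat.unpair_pair, evalo]
  | rfind cf ihf =>
    have hr : Primrec fun q : ℕ =>
        Nat.pair q.unpair.1.unpair.1 (Nat.pair q.unpair.1.unpair.2 q.unpair.2) := by
      have u1 : Primrec fun q : ℕ => q.unpair.1 := Primrec.fst.comp Primrec.unpair
      have u2 : Primrec fun q : ℕ => q.unpair.2 := Primrec.snd.comp Primrec.unpair
      exact Primrec₂.natPair.comp (u1.comp u1) (Primrec₂.natPair.comp (u2.comp u1) u2)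
    have hh : Partrec fun q : ℕ =>
        evalo (Oσ (dList q.unpair.1.unpair.1)) cf
          (Nat.pair q.unpair.1.unpair.2 q.unpair.2) :=
      (ihf.comp hr.to_comp).of_eq fun q => by simp
    refine (Partrec.nat_iff.2 (Nat.Partrec.rfind (Partrec.nat_iff.1 hh))).of_eq fun m => ?_
    simp only [evalo]
    exact congrArg Nat.rfind (funext fun n => by simp)

end OGJ
namespace OGJ

open Encodable Denumerable

/-- A plain code for evaluation of `c` against coded finite oracles. -/
noncomputable def cF (c : Codeo) : Nat.Partrec.Code :=
  (Nat.Partrec.Code.exists_code.1 (Partrec.nat_iff.1 (trans_partrec c))).choose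

theorem cF_spec (c : Codeo) : Nat.Partrec.Code.eval (cF c) =
    fun m : ℕ => evalo (Oσ (dList m.unpair.1)) c m.unpair.2 :=
  (Nat.Partrec.Code.exists_code.1 (Partrec.nat_iff.1 (trans_partrec c))).choose_spec

/-- `σ` together with a step bound `t` certifies halting of `{c}^{∅ ⊕ σ}(e)`. -/
noncomputable def certP (c : Codeo) (e : ℕ) (σ : List Bool) (t : ℕ) : Bool :=
  (Nat.Partrec.Code.evaln t (cF c) (Nat.pair (encode σ) e)).isSome

theorem certP_iff (c : Codeo) (e : ℕ) (σ : List Bool) :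
    (∃ t, certP c e σ t = true) ↔ (evalo (Oσ σ) c e).Dom := by
  have hval : Nat.Partrec.Code.eval (cF c) (Nat.pair (encode σ) e) = evalo (Oσ σ) c e := by
    rw [cF_spec]
    simp [dList_encode]
  constructor
  · rintro ⟨t, ht⟩
    rw [certP, Option.isSome_iff_exists] at ht
    obtain ⟨x, hx⟩ := ht
    have := Nat.Partrec.Code.evaln_sound hx
    rw [hval] at this
    exact Part.dom_iff_mem.2 ⟨x, this⟩
  · intro h
    obtain ⟨x, hx⟩ := Part.dom_iff_mem.1 h
    rw [← hval] at hx
    obtain ⟨t, ht⟩ := Nat.Partrec.Code.evaln_complete.1 hx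
    exact ⟨t, by rw [certP, Option.isSome_iff_exists]; exact ⟨x, ht⟩⟩

/-- certP is primitive recursive in `(σ, t)` (coded). -/
theorem certP_prim (c : Codeo) (e : ℕ) :
    Primrec fun n : ℕ => certP c e (dList n.unpair.1) n.unpair.2 := by
  have u1 : Primrec fun n : ℕ => n.unpair.1 := Primrec.fst.comp Primrec.unpair
  have u2 : Primrec fun n : ℕ => n.unpair.2 := Primrec.snd.comp Primrec.unpair
  have harg : Primrec fun n : ℕ =>
      ((n.unpair.2, cF c), Nat.pair (encode (dList n.unpair.1)) e) := by
    refine Primrec.pair (Primrec.pair u2 (Primrec.const (cF c))) ?_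
    exact Primrec₂.natPair.comp (Primrec.encode.comp (primrec_dList.comp u1)) (Primrec.const e)
  exact Primrec.option_isSome.comp (Nat.Partrec.Code.primrec_evaln.comp harg)

def bv (b : Bool) : ℕ := if b then 1 else 0

theorem bv_eq_chi {S : Set ℕ} {b : Bool} {j : ℕ} : bv b = chi S j ↔ (b = true ↔ j ∈ S) := by
  by_cases hj : j ∈ S <;> cases b <;> simp [bv, chi, hj]

def ballF (p : ℕ → Bool) : ℕ → Bool := fun k => Nat.rec true (fun n ih => ih && p n) k

def banyF (p : ℕ → Bool) : ℕ → Bool := fun k => Nat.rec false (fun n ih => ih || p n) k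

theorem ballF_iff {p : ℕ → Bool} {k : ℕ} : ballF p k = true ↔ ∀ n < k, p n = true := by
  induction k with
  | zero => simp [ballF]
  | succ k ih =>
    simp only [ballF, Nat.rec_add_one, Bool.and_eq_true] at *
    rw [ih]
    constructor
    · rintro ⟨h1, h2⟩ n hn
      rcases Nat.lt_succ_iff_lt_or_eq.1 hn with hn | rfl
      · exact h1 n hn
      · exact h2
    · intro h
      exact ⟨fun n hn => h n (Nat.lt_succ_of_lt hn), h k (Nat.lt_succ_self k)⟩

theorem banyF_iff {p : ℕ → Bool} {k : ℕ} : banyF p k = true ↔ ∃ n < k, p n = true := by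
  induction k with
  | zero => simp [banyF]
  | succ k ih =>
    simp only [banyF, Nat.rec_add_one, Bool.or_eq_true] at *
    rw [ih]
    constructor
    · rintro (⟨n, hn, h⟩ | h)
      · exact ⟨n, Nat.lt_succ_of_lt hn, h⟩
      · exact ⟨k, Nat.lt_succ_self k, h⟩
    · rintro ⟨n, hn, h⟩
      rcases Nat.lt_succ_iff_lt_or_eq.1 hn with hn | rfl
      · exact Or.inl ⟨n, hn, h⟩
      · exact Or.inr h

theorem primrec_ballF {α : Type} [Primcodable α] {p : α → ℕ → Bool} {k : α → ℕ}
    (hp : Primrec₂ p) (hk : Primrec k) : Primrec fun a => ballF (p a) (k a) :=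
  Primrec.nat_rec' hk (Primrec.const true)
    (((Primrec.dom_bool₂ (· && ·)).comp (Primrec.snd.comp Primrec.snd)
      (hp.comp Primrec.fst (Primrec.fst.comp Primrec.snd))).to₂)

theorem primrec_banyF {α : Type} [Primcodable α] {p : α → ℕ → Bool} {k : α → ℕ}
    (hp : Primrec₂ p) (hk : Primrec k) : Primrec fun a => banyF (p a) (k a) :=
  Primrec.nat_rec' hk (Primrec.const false)
    (((Primrec.dom_bool₂ (· || ·)).comp (Primrec.snd.comp Primrec.snd)
      (hp.comp Primrec.fst (Primrec.fst.comp Primrec.snd))).to₂)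

end OGJ
namespace OGJ

open Encodable Denumerable

/-- `σ` (as bits) is an initial segment of the oracle-value list `l`. -/
def matchA (σ : List Bool) (l : List ℕ) : Bool :=
  decide (σ.length ≤ l.length) && ballF (fun i => bv (σ.getD i false) == l.getD i 0) σ.length

theorem matchA_iff {σ : List Bool} {l : List ℕ} : matchA σ l = true ↔
    σ.length ≤ l.length ∧ ∀ i < σ.length, bv (σ.getD i false) = l.getD i 0 := by
  simp only [matchA, Bool.and_eq_true, decide_eq_true_eq, ballF_iff, beq_iff_eq]

/-- even bits of `σ` match odd entries of `l`, odd bits of `σ` are consistent with `τ0`. -/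
def matchB (τ0 : List Bool) (σ : List Bool) (l : List ℕ) : Bool :=
  decide (σ.length < l.length) && ballF (fun i =>
    if i % 2 = 0 then bv (σ.getD i false) == l.getD (i + 1) 0
    else if i / 2 < τ0.length then σ.getD i false == τ0.getD (i / 2) false else true) σ.length

theorem matchB_iff {τ0 σ : List Bool} {l : List ℕ} : matchB τ0 σ l = true ↔
    σ.length < l.length ∧ ∀ i < σ.length,
      (i % 2 = 0 → bv (σ.getD i false) = l.getD (i + 1) 0) ∧
      (i % 2 ≠ 0 → i / 2 < τ0.length → σ.getD i false = τ0.getD (i / 2) false) := by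
  simp only [matchB, Bool.and_eq_true, decide_eq_true_eq, ballF_iff]
  constructor
  · rintro ⟨h1, h2⟩
    refine ⟨h1, fun i hi => ?_⟩
    have := h2 i hi
    constructor
    · intro he; rw [if_pos he] at this; exact beq_iff_eq.1 this
    · intro he hτ; rw [if_neg he, if_pos hτ] at this; exact beq_iff_eq.1 this
  · rintro ⟨h1, h2⟩
    refine ⟨h1, fun i hi => ?_⟩
    obtain ⟨ha, hb⟩ := h2 i hi
    by_cases he : i % 2 = 0
    · rw [if_pos he]; exact beq_iff_eq.2 (ha he)
    · rw [if_neg he]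
      by_cases hτ : i / 2 < τ0.length
      · rw [if_pos hτ]; exact beq_iff_eq.2 (hb he hτ)
      · rw [if_neg hτ]

noncomputable def condA (c : Codeo) (e : ℕ) (l : List ℕ) (n : ℕ) : Bool :=
  certP c e (dList n.unpair.1) n.unpair.2 && matchA (dList n.unpair.1) l

noncomputable def condB (c : Codeo) (e : ℕ) (τ0 : List Bool) (l : List ℕ) (n : ℕ) : Bool :=
  certP c e (dList n.unpair.1) n.unpair.2 && matchB τ0 (dList n.unpair.1) l

theorem primrec_bv : Primrec bv := Primrec.dom_bool _

theorem primrec_matchA : Primrec₂ matchA := by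
  have hσ : Primrec fun p : List Bool × List ℕ => p.1 := Primrec.fst
  have hl : Primrec fun p : List Bool × List ℕ => p.2 := Primrec.snd
  have hlen : Primrec fun p : List Bool × List ℕ => p.1.length := Primrec.list_length.comp hσ
  have hin : Primrec₂ fun (p : List Bool × List ℕ) (i : ℕ) =>
      (bv (p.1.getD i false) == p.2.getD i 0) := by
    have h1 : Primrec₂ fun (p : List Bool × List ℕ) (i : ℕ) => bv (p.1.getD i false) :=
      (primrec_bv.comp ((Primrec.list_getD false).comp (hσ.comp Primrec.fst)
        Primrec.snd)).to₂
    have h2 : Primrec₂ fun (p : List Bool × List ℕ) (i : ℕ) => p.2.getD i 0 :=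
      ((Primrec.list_getD 0).comp (hl.comp Primrec.fst) Primrec.snd).to₂
    exact (Primrec.beq.comp h1 h2).to₂
  have hball : Primrec fun p : List Bool × List ℕ =>
      ballF (fun i => bv (p.1.getD i false) == p.2.getD i 0) p.1.length :=
    primrec_ballF hin hlen
  have hdec : Primrec fun p : List Bool × List ℕ => decide (p.1.length ≤ p.2.length) :=
    (Primrec.nat_le.comp hlen (Primrec.list_length.comp hl)).decide
  exact ((Primrec.dom_bool₂ (· && ·)).comp hdec hball).to₂

theorem primrec_matchB (τ0 : List Bool) : Primrec₂ (matchB τ0) := by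
  have hσ : Primrec fun p : List Bool × List ℕ => p.1 := Primrec.fst
  have hl : Primrec fun p : List Bool × List ℕ => p.2 := Primrec.snd
  have hlen : Primrec fun p : List Bool × List ℕ => p.1.length := Primrec.list_length.comp hσ
  have hin : Primrec₂ fun (p : List Bool × List ℕ) (i : ℕ) =>
      (if i % 2 = 0 then bv (p.1.getD i false) == p.2.getD (i + 1) 0
       else if i / 2 < τ0.length then p.1.getD i false == τ0.getD (i / 2) false else true) := by
    have hi : Primrec fun q : (List Bool × List ℕ) × ℕ => q.2 := Primrec.snd
    have hmod : PrimrecPred fun q : (List Bool × List ℕ) × ℕ => q.2 % 2 = 0 :=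
      PrimrecRel.comp Primrec.eq (Primrec.nat_mod.comp hi (Primrec.const 2)) (Primrec.const 0)
    have hbr1 : Primrec fun q : (List Bool × List ℕ) × ℕ =>
        (bv (q.1.1.getD q.2 false) == q.1.2.getD (q.2 + 1) 0) := by
      have h1 : Primrec fun q : (List Bool × List ℕ) × ℕ => bv (q.1.1.getD q.2 false) :=
        primrec_bv.comp ((Primrec.list_getD false).comp (hσ.comp Primrec.fst) hi)
      have h2 : Primrec fun q : (List Bool × List ℕ) × ℕ => q.1.2.getD (q.2 + 1) 0 :=
        (Primrec.list_getD 0).comp (hl.comp Primrec.fst) (Primrec.succ.comp hi)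
      exact Primrec.beq.comp h1 h2
    have hbr2 : Primrec fun q : (List Bool × List ℕ) × ℕ =>
        (if q.2 / 2 < τ0.length then q.1.1.getD q.2 false == τ0.getD (q.2 / 2) false
         else true) := by
      have hdiv : Primrec fun q : (List Bool × List ℕ) × ℕ => q.2 / 2 :=
        Primrec.nat_div.comp hi (Primrec.const 2)
      have hlt : PrimrecPred fun q : (List Bool × List ℕ) × ℕ => q.2 / 2 < τ0.length :=
        PrimrecRel.comp Primrec.nat_lt hdiv (Primrec.const τ0.length)
      refine Primrec.ite hlt ?_ (Primrec.const true)
      exact Primrec.beq.comp ((Primrec.list_getD false).comp (hσ.comp Primrec.fst) hi)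
        (((Primrec.list_getD false).comp (Primrec.const τ0) hdiv))
    exact (Primrec.ite hmod hbr1 hbr2).to₂
  have hball := primrec_ballF hin hlen
  have hdec : Primrec fun p : List Bool × List ℕ => decide (p.1.length < p.2.length) :=
    (Primrec.nat_lt.comp hlen (Primrec.list_length.comp hl)).decide
  exact ((Primrec.dom_bool₂ (· && ·)).comp hdec hball).to₂

theorem primrec_condA (c : Codeo) (e : ℕ) : Primrec₂ (condA c e) := by
  have h1 : Primrec fun p : List ℕ × ℕ => certP c e (dList p.2.unpair.1) p.2.unpair.2 :=
    (certP_prim c e).comp Primrec.snd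
  have h2 : Primrec fun p : List ℕ × ℕ => matchA (dList p.2.unpair.1) p.1 :=
    primrec_matchA.comp
      (primrec_dList.comp ((Primrec.fst.comp Primrec.unpair).comp Primrec.snd)) Primrec.fst
  exact ((Primrec.dom_bool₂ (· && ·)).comp h1 h2).to₂

theorem primrec_condB (c : Codeo) (e : ℕ) (τ0 : List Bool) : Primrec₂ (condB c e τ0) := by
  have h1 : Primrec fun p : List ℕ × ℕ => certP c e (dList p.2.unpair.1) p.2.unpair.2 :=
    (certP_prim c e).comp Primrec.snd
  have h2 : Primrec fun p : List ℕ × ℕ => matchB τ0 (dList p.2.unpair.1) p.1 :=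
    (primrec_matchB τ0).comp
      (primrec_dList.comp ((Primrec.fst.comp Primrec.unpair).comp Primrec.snd)) Primrec.fst
  exact ((Primrec.dom_bool₂ (· && ·)).comp h1 h2).to₂

/-- The check functions on coded (reversed) oracle-value lists. -/
noncomputable def chk (cond : List ℕ → ℕ → Bool) (z : ℕ) : ℕ :=
  if banyF (cond (ofNat (List ℕ) z).reverse) ((ofNat (List ℕ) z).reverse.length + 1) = true
  then 0 else 1

theorem primrec_chk {cond : List ℕ → ℕ → Bool} (hcond : Primrec₂ cond) :
    Primrec (chk cond) := by
  have hrev : Primrec fun z : ℕ => (ofNat (List ℕ) z).reverse :=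
    Primrec.list_reverse.comp (Primrec.ofNat (List ℕ))
  have hany : Primrec fun z : ℕ =>
      banyF (cond (ofNat (List ℕ) z).reverse) ((ofNat (List ℕ) z).reverse.length + 1) :=
    primrec_banyF (hcond.comp (hrev.comp Primrec.fst) Primrec.snd).to₂
      (Primrec.succ.comp (Primrec.list_length.comp hrev))
  unfold chk
  refine Primrec.ite ?_ (Primrec.const 0) (Primrec.const 1)
  exact PrimrecRel.comp Primrec.eq hany (Primrec.const true)

end OGJ
namespace OGJ

open Encodable Denumerable

/-- Value of the joined oracle `f ⊕ ρ` at position `j`. -/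
noncomputable def V (f : ℕ → ℕ) (ρ : List Bool) (j : ℕ) : ℕ :=
  if j % 2 = 0 then f (j / 2) else bv (ρ.getD (j / 2) false)

/-- First `k` values of the joined oracle. -/
noncomputable def W (f : ℕ → ℕ) (ρ : List Bool) (k : ℕ) : List ℕ := (List.range k).map (V f ρ)

theorem W_length {f : ℕ → ℕ} {ρ : List Bool} {k : ℕ} : (W f ρ k).length = k := by
  simp [W]

theorem W_getD {f : ℕ → ℕ} {ρ : List Bool} {k i : ℕ} (h : i < k) :
    (W f ρ k).getD i 0 = V f ρ i := by
  rw [List.getD_eq_getElem _ _ (by simpa [W] using h)]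
  simp [W, h]

theorem V_mem_oracle {f : ℕ → ℕ} {ρ : List Bool} {s : ℕ} (hs : s ≤ ρ.length) :
    ∀ j < 2 * s, V f ρ j ∈ join2P f (listOracle ρ) j := by
  intro j hj
  unfold V join2P
  by_cases hp : j % 2 = 0
  · simp [hp]
  · rw [if_neg hp, if_neg hp]
    have hlt : j / 2 < ρ.length := by omega
    unfold listOracle
    rw [dif_pos hlt]
    rw [List.getD_eq_getElem _ _ hlt]
    simp [bv]

theorem oracle_dom_odd {f : ℕ → ℕ} {ρ : List Bool} {j : ℕ}
    (h : (join2P f (listOracle ρ) j).Dom) (hodd : j % 2 = 1) : j / 2 < ρ.length := by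
  unfold join2P at h
  rw [if_neg (by omega)] at h
  unfold listOracle at h
  by_contra hc
  rw [dif_neg hc] at h
  exact h

theorem seqList_join {f : ℕ → ℕ} {ρ : List Bool} {s : ℕ} (hs : s ≤ ρ.length) :
    seqList (join2P f (listOracle ρ)) (2 * s) = Part.some ((W f ρ (2 * s)).reverse) :=
  seqList_eq fun j hj => V_mem_oracle hs j hj

theorem chk_encode (cond : List ℕ → ℕ → Bool) (l : List ℕ) :
    chk cond (encode l.reverse) =
      if banyF (cond l) (l.length + 1) = true then 0 else 1 := by
  unfold chk
  simp

theorem chk_eq_zero_iff {cond : List ℕ → ℕ → Bool} {l : List ℕ} :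
    chk cond (encode l.reverse) = 0 ↔ ∃ n ≤ l.length, cond l n = true := by
  rw [chk_encode]
  split
  · next h =>
    simp only [eq_self_iff_true, true_iff]
    obtain ⟨n, hn, hc⟩ := banyF_iff.1 h
    exact ⟨n, by omega, hc⟩
  · next h =>
    simp only [Nat.one_ne_zero, false_iff, not_exists]
    intro n
    rw [not_and]
    intro hn hc
    exact h (banyF_iff.2 ⟨n, by omega, hc⟩)

theorem dcode_exists (cond : List ℕ → ℕ → Bool) (hcond : Primrec₂ cond) :
    ∃ d : Codeo, ∀ O x, evalo O d x =
      Nat.rfind fun k => (fun m => m = 0) <$>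
        ((seqList O (2 * k)).map encode).bind fun z => Part.some (chk cond z) := by
  have hg : Primrec fun q : ℕ => Nat.pair 0 (2 * q.unpair.2) :=
    Primrec₂.natPair.comp (Primrec.const 0)
      ((Primrec.nat_mul.comp (Primrec.const 2) (Primrec.snd.comp Primrec.unpair)))
  have u : UCode fun O q => (seqList O (2 * q.unpair.2)).map encode :=
    (ucode_precomp ucode_read hg).of_eq fun O q => by simp [Nat.unpaired, Nat.unpair_pair]
  have u2 : UCode fun O q => ((seqList O (2 * q.unpair.2)).map encode).bind
      fun z => Part.some (chk cond z) :=
    (ucode_comp (ucode_partrec' (primrec_chk hcond)) u).of_eq fun O n => by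
      rw [Part.bind_eq_bind]
  obtain ⟨d, hd⟩ := ucode_rfind u2
  refine ⟨d, fun O x => ?_⟩
  rw [hd O]
  exact congrArg Nat.rfind (funext fun k => by simp [Nat.unpair_pair])

theorem dcode_dom_iff {cond : List ℕ → ℕ → Bool} {d : Codeo}
    (hd : ∀ O x, evalo O d x =
      Nat.rfind fun k => (fun m => m = 0) <$>
        ((seqList O (2 * k)).map encode).bind fun z => Part.some (chk cond z))
    (f : ℕ → ℕ) (ρ : List Bool) (x : ℕ) :
    (evalo (join2P f (listOracle ρ)) d x).Dom ↔
      ∃ s ≤ ρ.length, ∃ n ≤ 2 * s, cond (W f ρ (2 * s)) n = true := by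
  rw [hd]
  refine Nat.rfind_dom.trans ?_
  constructor
  · rintro ⟨k, htrue, _⟩
    rw [Part.map_eq_map, Part.mem_map_iff _] at htrue
    obtain ⟨v, hv, hvt⟩ := htrue
    rw [Part.mem_bind_iff] at hv
    obtain ⟨z, hz, hv⟩ := hv
    have hkdom : (seqList (join2P f (listOracle ρ)) (2 * k)).Dom := by
      rw [Part.mem_map_iff _] at hz
      obtain ⟨l, hl, _⟩ := hz
      exact Part.dom_iff_mem.2 ⟨l, hl⟩
    have hk : k ≤ ρ.length := by
      rcases Nat.eq_zero_or_pos k with rfl | hpos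
      · omega
      · have := seqList_dom hkdom (2 * k - 1) (by omega)
        have := oracle_dom_odd this (by omega)
        omega
    rw [seqList_join hk] at hz
    rw [Part.mem_map_iff _] at hz
    obtain ⟨l, hl, rfl⟩ := hz
    rw [Part.mem_some_iff] at hl
    subst hl
    rw [Part.mem_some_iff] at hv
    subst hv
    have hv0 : chk cond (encode ((W f ρ (2 * k)).reverse)) = 0 := by
      simpa using hvt
    obtain ⟨n, hn, hc⟩ := chk_eq_zero_iff.1 hv0
    exact ⟨k, hk, n, by simpa [W_length] using hn, hc⟩
  · rintro ⟨s, hs, n, hn, hc⟩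
    have hval : ∀ m, m ≤ ρ.length →
        ((fun m => decide (m = 0)) <$> ((seqList (join2P f (listOracle ρ)) (2 * m)).map
            encode).bind fun z => Part.some (chk cond z)) =
          Part.some (decide (chk cond (encode ((W f ρ (2 * m)).reverse)) = 0)) := by
      intro m hm
      rw [seqList_join hm]
      simp [Part.map_eq_map]
    refine ⟨s, ?_, ?_⟩
    · rw [hval s hs, Part.mem_some_iff]
      symm
      rw [decide_eq_true_eq]
      exact chk_eq_zero_iff.2 ⟨n, by simpa [W_length] using hn, hc⟩
    · intro m hm
      rw [hval m (le_trans (le_of_lt hm) hs)]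
      exact trivial
  
end OGJ
namespace OGJ

open Encodable Denumerable

theorem bv_inj {a b : Bool} (h : bv a = bv b) : a = b := by
  cases a <;> cases b <;> simp [bv] at h ⊢

theorem getD_initseg_iff {σ : List Bool} {S : Set ℕ} (hσ : IsInitSeg σ S) {i : ℕ}
    (h : i < σ.length) : σ.getD i false = true ↔ i ∈ S := by
  rw [List.getD_eq_getElem _ _ h]
  have := hσ i h
  rw [List.get_eq_getElem] at this
  exact this

theorem ofFn_getD {n : ℕ} {f : Fin n → Bool} {k : ℕ} (h : k < n) :
    (List.ofFn f).getD k false = f ⟨k, h⟩ := by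
  rw [List.getD_eq_getElem _ _ (by simpa using h), List.getElem_ofFn]

end OGJ

theorem oneGeneric_join' (A B : Set ℕ)
    (hBA : OneGenericOver A B) (hA : OneGeneric A) :
    OneGeneric (sjoin A B) := by
  classical
  intro c
  obtain ⟨d, hd⟩ := OGJ.dcode_exists (OGJ.condA c (encodeCodeo c))
    (OGJ.primrec_condA c (encodeCodeo c))
  obtain ⟨τ0, hτ0B, hcase⟩ := hBA d
  rcases hcase with hhalt | hdiv
  · -- the search halted: we get an explicit initial segment forcing convergence
    rw [OGJ.dcode_dom_iff hd] at hhalt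
    obtain ⟨s, hs, n, hn, hc⟩ := hhalt
    unfold OGJ.condA at hc
    rw [Bool.and_eq_true] at hc
    obtain ⟨hcert, hmatch⟩ := hc
    set σ : List Bool := OGJ.dList n.unpair.1 with hσdef
    rw [OGJ.matchA_iff] at hmatch
    obtain ⟨hlen, hmatch⟩ := hmatch
    rw [OGJ.W_length] at hlen
    have hval : ∀ i < σ.length, OGJ.bv (σ.getD i false) = OGJ.V (chi A) τ0 i := by
      intro i hi
      rw [hmatch i hi, OGJ.W_getD (by omega)]
    refine ⟨σ, ?_, Or.inl ?_⟩
    · intro i hi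
      rw [List.get_eq_getElem, ← List.getD_eq_getElem σ false hi]
      have h2 := hval i hi
      rcases Nat.mod_two_eq_zero_or_one i with hp | hp
      · rw [OGJ.V, if_pos hp] at h2
        rw [OGJ.bv_eq_chi] at h2
        rw [h2]
        simp [sjoin, hp]
      · rw [OGJ.V, if_neg (by omega)] at h2
        have h3 := OGJ.bv_inj h2
        rw [h3]
        have hjτ : i / 2 < τ0.length := by omega
        rw [OGJ.getD_initseg_iff hτ0B hjτ]
        simp [sjoin, hp]
    · exact (OGJ.certP_iff c (encodeCodeo c) σ).1 ⟨n.unpair.2, hcert⟩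
  · -- the search diverges on all extensions of τ0
    have star : ∀ (σ : List Bool) (t : ℕ), OGJ.certP c (encodeCodeo c) σ t = true →
        (∀ j, 2 * j < σ.length → OGJ.bv (σ.getD (2 * j) false) = chi A j) →
        (∀ j, 2 * j + 1 < σ.length → j < τ0.length →
          σ.getD (2 * j + 1) false = τ0.getD j false) →
        False := by
      intro σ t hcert hev hodd
      set s : ℕ := σ.length + τ0.length + Nat.pair (Encodable.encode σ) t + 1 with hsdef
      set ext : List Bool :=
        List.ofFn (fun j : Fin (s - τ0.length) => σ.getD (2 * (τ0.length + (j : ℕ)) + 1) false)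
        with hextdef
      set ρ : List Bool := τ0 ++ ext with hρdef
      have hρlen : ρ.length = s := by
        simp only [hρdef, hextdef, List.length_append, List.length_ofFn]
        omega
      refine hdiv ρ (List.prefix_append _ _) ?_
      rw [OGJ.dcode_dom_iff hd]
      have hpair : Nat.pair (Encodable.encode σ) t ≤ 2 * s := by omega
      refine ⟨s, by omega, Nat.pair (Encodable.encode σ) t, hpair, ?_⟩
      unfold OGJ.condA
      rw [Bool.and_eq_true]
      constructor
      · rw [Nat.unpair_pair]
        simpa [OGJ.dList_encode] using hcert
      · rw [Nat.unpair_pair]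
        rw [OGJ.matchA_iff]
        rw [OGJ.dList_encode, OGJ.W_length]
        refine ⟨by omega, ?_⟩
        intro i hi
        rw [OGJ.W_getD (by omega)]
        rcases Nat.mod_two_eq_zero_or_one i with hp | hp
        · rw [OGJ.V, if_pos hp]
          have := hev (i / 2) (by omega)
          rw [show 2 * (i / 2) = i by omega] at this
          exact this
        · rw [OGJ.V, if_neg (by omega)]
          congr 1
          have hij : i = 2 * (i / 2) + 1 := by omega
          by_cases hjτ : i / 2 < τ0.length
          · rw [hρdef, List.getD_append _ _ _ _ hjτ]
            rw [← hodd (i / 2) (by omega) hjτ, ← hij]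
          · have hjlt : i / 2 - τ0.length < s - τ0.length := by omega
            rw [hρdef, List.getD_append_right _ _ _ _ (by omega), hextdef,
              OGJ.ofFn_getD hjlt]
            show σ.getD i false = σ.getD (2 * (τ0.length + (i / 2 - τ0.length)) + 1) false
            congr 1
            omega
    obtain ⟨d2, hd2⟩ := OGJ.dcode_exists (OGJ.condB c (encodeCodeo c) τ0)
      (OGJ.primrec_condB c (encodeCodeo c) τ0)
    obtain ⟨α, hαA, hcase2⟩ := hA d2
    rcases hcase2 with hhalt2 | hdiv2
    · -- impossible by star
      exfalso
      rw [OGJ.dcode_dom_iff hd2] at hhalt2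
      obtain ⟨s, hs, n, hn, hc⟩ := hhalt2
      unfold OGJ.condB at hc
      rw [Bool.and_eq_true] at hc
      obtain ⟨hcert, hmatch⟩ := hc
      set σ : List Bool := OGJ.dList n.unpair.1 with hσdef
      rw [OGJ.matchB_iff] at hmatch
      obtain ⟨hlen, hmatch⟩ := hmatch
      rw [OGJ.W_length] at hlen
      refine star σ n.unpair.2 hcert ?_ ?_
      · intro j hj
        have h2 := (hmatch (2 * j) hj).1 (by omega)
        rw [OGJ.W_getD (by omega)] at h2
        rw [OGJ.V, if_neg (by omega)] at h2
        rw [show (2 * j + 1) / 2 = j by omega] at h2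
        have hja : j < α.length := by omega
        have h3 : OGJ.bv (α.getD j false) = chi A j :=
          OGJ.bv_eq_chi.2 (OGJ.getD_initseg_iff hαA hja)
        exact h2.trans h3
      · intro j hj hjτ
        have h2 := (hmatch (2 * j + 1) hj).2 (by omega)
        rw [show (2 * j + 1) / 2 = j by omega] at h2
        exact h2 hjτ
    · -- build the final forcing condition
      set m : ℕ := max α.length τ0.length with hmdef
      set γ : List Bool := List.ofFn (fun i : Fin (2 * m) =>
        if (i : ℕ) % 2 = 0 then decide ((i : ℕ) / 2 ∈ A) else decide ((i : ℕ) / 2 ∈ B))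
        with hγdef
      have hγlen : γ.length = 2 * m := by simp [hγdef]
      have hγval : ∀ i, ∀ _ : i < 2 * m, γ.getD i false =
          (if i % 2 = 0 then decide (i / 2 ∈ A) else decide (i / 2 ∈ B)) := by
        intro i h
        rw [hγdef, OGJ.ofFn_getD h]
      refine ⟨γ, ?_, Or.inr ?_⟩
      · intro i hi
        rw [List.get_eq_getElem, ← List.getD_eq_getElem γ false hi]
        rw [hγval i (by rw [← hγlen]; exact hi)]
        rcases Nat.mod_two_eq_zero_or_one i with hp | hp
        · rw [if_pos hp]; simp [sjoin, hp]
        · rw [if_neg (by omega)]; simp [sjoin, hp]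
      · intro τ' hpre hdom
        obtain ⟨t, hcert⟩ := (OGJ.certP_iff c (encodeCodeo c) τ').2 hdom
        obtain ⟨rest, hτ'⟩ := hpre
        have hγτ' : ∀ k, k < 2 * m → τ'.getD k false = γ.getD k false := by
          intro k hk
          rw [← hτ', List.getD_append _ _ _ _ (by omega)]
        have hτ'len : 2 * m ≤ τ'.length := by
          rw [← hτ']
          simp [hγlen]
        set s : ℕ := τ'.length + α.length + Nat.pair (Encodable.encode τ') t + 1 with hsdef
        set ext : List Bool :=
          List.ofFn (fun j : Fin (s - α.length) => τ'.getD (2 * (α.length + (j : ℕ))) false)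
          with hextdef
        set α' : List Bool := α ++ ext with hα'def
        have hα'len : α'.length = s := by
          simp only [hα'def, hextdef, List.length_append, List.length_ofFn]
          omega
        refine hdiv2 α' (List.prefix_append _ _) ?_
        rw [OGJ.dcode_dom_iff hd2]
        have hpair : Nat.pair (Encodable.encode τ') t ≤ 2 * s := by omega
        refine ⟨s, by omega, Nat.pair (Encodable.encode τ') t, hpair, ?_⟩
        unfold OGJ.condB
        rw [Bool.and_eq_true]
        constructor
        · rw [Nat.unpair_pair]
          simpa [OGJ.dList_encode] using hcert
        · rw [Nat.unpair_pair, OGJ.dList_encode, OGJ.matchB_iff, OGJ.W_length]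
          refine ⟨by omega, ?_⟩
          intro i hi
          constructor
          · intro hp
            rw [OGJ.W_getD (by omega), OGJ.V, if_neg (by omega)]
            rw [show (i + 1) / 2 = i / 2 by omega]
            congr 1
            by_cases hja : i / 2 < α.length
            · rw [hα'def, List.getD_append _ _ _ _ hja]
              have hi2m : i < 2 * m := by omega
              rw [hγτ' i hi2m, hγval i hi2m, if_pos hp]
              rw [Bool.eq_iff_iff, decide_eq_true_eq]
              exact (OGJ.getD_initseg_iff hαA hja).symm
            · have hjlt : i / 2 - α.length < s - α.length := by omega
              rw [hα'def, List.getD_append_right _ _ _ _ (by omega), hextdef,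
                OGJ.ofFn_getD hjlt]
              show τ'.getD i false = τ'.getD (2 * (α.length + (i / 2 - α.length))) false
              congr 1
              omega
          · intro hp hjτ
            have hi2m : i < 2 * m := by omega
            rw [hγτ' i hi2m, hγval i hi2m, if_neg (by omega)]
            rw [Bool.eq_iff_iff, decide_eq_true_eq]
            exact (OGJ.getD_initseg_iff hτ0B hjτ).symm

/-- If `B` is 1-generic over `A` and `A` is 1-generic, then `A ⊕ B` is 1-generic. -/
theorem oneGeneric_join (A B : Set ℕ)
    (hBA : OneGenericOver A B) (hA : OneGeneric A) :
    OneGeneric (sjoin A B) := by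
  exact oneGeneric_join' A B hBA hA
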